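/- Let (X,d) be a connected locally compact metric space, x, y ∈ X, and ε > 0 such that the closed ball of radius 2ε around y is compact. Then the set F = {g ∈ I(X,d) : d(g x, y) ≤ 2ε} has the property that {g x' : g ∈ F} is relatively compact for every x' ∈ X. -/
import Mathlib


open Function Set Metric Topology

/-- If every point of a compact set `K` has a compact closed ball of uniform radius `c`,
then the closed `t`-thickening of `K` (for `t < c`) is contained in a compact set. -/
lemma aux_thick {X : Type*} [MetricSpace X] {K : Set X} (hK : IsCompact K)
    {c t : ℝ} (htc : t < c)
    (hc : ∀ k ∈ K, IsCompact (closedBall k c)) :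
    ∃ C : Set X, IsCompact C ∧ ∀ z : X, (∃ k ∈ K, dist z k ≤ t) → z ∈ C := by
  obtain ⟨s, hsK, hcov⟩ := hK.elim_nhds_subcover (fun k => ball k (c - t))
    (fun k hk => ball_mem_nhds k (by linarith))
  refine ⟨⋃ k ∈ s, closedBall k c, s.isCompact_biUnion (fun k hk => hc k (hsK k hk)), ?_⟩
  rintro z ⟨k, hkK, hzk⟩
  obtain ⟨i, hi⟩ := Set.mem_iUnion.1 (hcov hkK)
  simp only [Set.mem_iUnion] at hi ⊢
  obtain ⟨his, hki⟩ := hi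
  exact ⟨i, his, mem_closedBall.2 (by
    have := mem_ball.1 hki
    calc dist z i ≤ dist z k + dist k i := dist_triangle z k i
    _ ≤ t + (c - t) := by linarith
    _ = c := by ring)⟩

/-- Key step: relative compactness of the orbit propagates to nearby points. -/
lemma aux_step {X : Type*} [MetricSpace X] (F : Set (X → X))
    (hFiso : ∀ g ∈ F, Isometry g ∧ Surjective g)
    {x'' x' : X} {ρ : ℝ} (hcb : IsCompact (closedBall x'' ρ))
    (hd : dist x' x'' < ρ / 2)
    (hx'' : ∃ K : Set X, IsCompact K ∧ (fun g => g x'') '' F ⊆ K) :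
    ∃ K : Set X, IsCompact K ∧ (fun g => g x') '' F ⊆ K := by
  obtain ⟨K, hK, hsub⟩ := hx''
  set K' := closure ((fun g => g x'') '' F) with hK'
  have hK'c : IsCompact K' :=
    hK.of_isClosed_subset isClosed_closure (closure_minimal hsub hK.isClosed)
  -- every point of K' has a compact closed ball of radius ρ/2
  have hballs : ∀ k ∈ K', IsCompact (closedBall k (ρ / 2)) := by
    intro k hk
    have hρ : 0 ≤ ρ / 2 := le_trans dist_nonneg hd.le
    rcases eq_or_lt_of_le hρ with hρ0 | hρpos
    · -- degenerate case ρ/2 = 0 : the ball is a single point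
      rw [← hρ0, closedBall_zero]
      exact isCompact_singleton
    · rcases Metric.mem_closure_iff.1 hk (ρ / 2) hρpos with ⟨q, hqF, hdq⟩
      rcases hqF with ⟨g, hgF, rfl⟩
      obtain ⟨hgi, hgs⟩ := hFiso g hgF
      have himg : closedBall (g x'') ρ = g '' closedBall x'' ρ := by
        ext z
        constructor
        · intro hz
          obtain ⟨w, rfl⟩ := hgs z
          exact ⟨w, by simpa [hgi.dist_eq] using hz, rfl⟩
        · rintro ⟨w, hw, rfl⟩
          simpa [hgi.dist_eq] using hw
      have hcomp : IsCompact (closedBall (g x'') ρ) := himg ▸ hcb.image hgi.continuous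
      refine hcomp.of_isClosed_subset Metric.isClosed_closedBall ?_
      intro z hz
      have : dist z (g x'') ≤ dist z k + dist k (g x'') := dist_triangle _ _ _
      have hz' : dist z k ≤ ρ / 2 := mem_closedBall.1 hz
      exact mem_closedBall.2 (by linarith [hdq.le])
  obtain ⟨C, hC, hCsub⟩ := aux_thick hK'c hd hballs
  refine ⟨C, hC, ?_⟩
  rintro _ ⟨g, hgF, rfl⟩
  obtain ⟨hgi, _⟩ := hFiso g hgF
  exact hCsub _ ⟨g x'', subset_closure ⟨g, hgF, rfl⟩, by rw [hgi.dist_eq]⟩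

theorem stmt_11 {X : Type*} [MetricSpace X] [LocallyCompactSpace X]
    [ConnectedSpace X] (x y : X) (ε : ℝ) (hε : 0 < ε)
    (hball : IsCompact (Metric.closedBall y (2 * ε))) :
    ∀ x' : X, IsCompact (closure
      ((fun g => g x') ''
        {g : X → X | (Isometry g ∧ Surjective g) ∧ dist (g x) y ≤ 2 * ε})) := by
  set F : Set (X → X) :=
    {g : X → X | (Isometry g ∧ Surjective g) ∧ dist (g x) y ≤ 2 * ε} with hFdef
  have hFiso : ∀ g ∈ F, Isometry g ∧ Surjective g := fun g hg => hg.1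
  set A : Set X := {x' : X | ∃ K : Set X, IsCompact K ∧ (fun g => g x') '' F ⊆ K} with hAdef
  have hxA : x ∈ A := by
    refine ⟨closedBall y (2 * ε), hball, ?_⟩
    rintro _ ⟨g, hg, rfl⟩
    exact mem_closedBall.2 hg.2
  have hopen : IsOpen A := by
    rw [Metric.isOpen_iff]
    intro x'' hx''
    obtain ⟨ρ, hρpos, hρ⟩ := exists_isCompact_closedBall x''
    refine ⟨ρ / 2, by linarith, fun x' hx' => ?_⟩
    exact aux_step F hFiso hρ (by simpa [dist_comm] using mem_ball.1 hx') hx''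
  have hclosed : IsClosed A := by
    rw [← isOpen_compl_iff, Metric.isOpen_iff]
    intro x' hx'
    obtain ⟨ρ, hρpos, hρ⟩ := exists_isCompact_closedBall x'
    refine ⟨ρ / 4, by linarith, ?_⟩
    intro z hz
    by_contra hzA
    simp only [Set.mem_compl_iff, not_not] at hzA hx'
    apply hx'
    have hdz : dist x' z < ρ / 4 := by simpa [dist_comm] using mem_ball.1 hz
    have hcb : IsCompact (closedBall z (ρ / 2)) := by
      refine hρ.of_isClosed_subset Metric.isClosed_closedBall ?_
      intro w hw
      have : dist w z ≤ ρ / 2 := mem_closedBall.1 hw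
      have : dist w x' ≤ dist w z + dist z x' := dist_triangle _ _ _
      exact mem_closedBall.2 (by
        have h1 : dist w z ≤ ρ / 2 := mem_closedBall.1 hw
        have h2 : dist z x' < ρ / 4 := by simpa [dist_comm] using hdz
        linarith)
    exact aux_step F hFiso hcb (by linarith : dist x' z < (ρ / 2) / 2) hzA
  have hA : A = Set.univ :=
    IsClopen.eq_univ ⟨hclosed, hopen⟩ ⟨x, hxA⟩
  intro x'
  have hx' : x' ∈ A := hA ▸ Set.mem_univ x'
  obtain ⟨K, hK, hsub⟩ := hx'
  exact hK.of_isClosed_subset isClosed_closure (closure_minimal hsub hK.isClosed)
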